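/- Let Λ ⊆ R^m be a lattice, t ∈ R^m with α = d(t,Λ) ≤ λ₁(Λ)/(2γ) for some γ ≥ 1, and t† a closest lattice vector to t. If u ∈ Λ, a ∈ Z, and ‖(u − a·t, −a·α)‖ < √2·γ·α in R^{m+1}, then u − a·t† satisfies ‖u − a·t†‖ < λ₁(Λ), hence u = a·t†. -/
import Mathlib


theorem short_lifted_vector_is_multiple {m n : ℕ} (b : Fin n → EuclideanSpace ℝ (Fin m))
    (hb : LinearIndependent ℝ b)
    (L : Set (EuclideanSpace ℝ (Fin m)))
    (hL : L = (Submodule.span ℤ (Set.range b) : Submodule ℤ (EuclideanSpace ℝ (Fin m))))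
    (γ α : ℝ) (hγ : 1 ≤ γ)
    (t : EuclideanSpace ℝ (Fin m))
    (hα : α = Metric.infDist t L)
    (hbdd : α ≤ sInf {r : ℝ | ∃ u ∈ L, u ≠ 0 ∧ ‖u‖ = r} / (2 * γ))
    (tc : EuclideanSpace ℝ (Fin m)) (htcL : tc ∈ L) (htc : ‖tc - t‖ = α)
    (u : EuclideanSpace ℝ (Fin m)) (huL : u ∈ L) (a : ℤ)
    (hshort : ‖(WithLp.equiv 2 (EuclideanSpace ℝ (Fin m) × ℝ)).symm
        (u - (a : ℝ) • t, -(a : ℝ) * α)‖ < Real.sqrt 2 * γ * α) :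
    ‖u - (a : ℝ) • tc‖ < sInf {r : ℝ | ∃ w ∈ L, w ≠ 0 ∧ ‖w‖ = r} ∧
      u = (a : ℝ) • tc := by
  set S := {r : ℝ | ∃ w ∈ L, w ≠ 0 ∧ ‖w‖ = r} with hS
  have hα0 : 0 ≤ α := by
    rw [hα]; exact Metric.infDist_nonneg
  have hγ0 : (0:ℝ) < γ := lt_of_lt_of_le one_pos hγ
  -- norm squared of the lifted vector
  have hsq : ‖u - (a : ℝ) • t‖ ^ 2 + ((a:ℝ) * α) ^ 2
      < 2 * γ ^ 2 * α ^ 2 := by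
    have h2 : (0:ℝ) ≤ ‖(WithLp.equiv 2 (EuclideanSpace ℝ (Fin m) × ℝ)).symm
        (u - (a : ℝ) • t, -(a : ℝ) * α)‖ := norm_nonneg _
    have hsq' := WithLp.prod_norm_sq_eq_of_L2 ((WithLp.equiv 2 (EuclideanSpace ℝ (Fin m) × ℝ)).symm
        (u - (a : ℝ) • t, -(a : ℝ) * α))
    have hfst : ((WithLp.equiv 2 (EuclideanSpace ℝ (Fin m) × ℝ)).symm
        (u - (a : ℝ) • t, -(a : ℝ) * α)).fst = u - (a : ℝ) • t := rfl
    have hsnd : ((WithLp.equiv 2 (EuclideanSpace ℝ (Fin m) × ℝ)).symm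
        (u - (a : ℝ) • t, -(a : ℝ) * α)).snd = -(a : ℝ) * α := rfl
    rw [hfst, hsnd] at hsq'
    have hrhs : (Real.sqrt 2 * γ * α) ^ 2 = 2 * γ ^ 2 * α ^ 2 := by
      rw [mul_pow, mul_pow, Real.sq_sqrt (by norm_num : (0:ℝ) ≤ 2)]
    have hpow := pow_lt_pow_left₀ hshort h2 (n := 2) (by norm_num)
    rw [hrhs, hsq', Real.norm_eq_abs] at hpow
    nlinarith [hpow, sq_abs (-(a:ℝ) * α)]
  have hαpos : 0 < α := by
    rcases lt_or_eq_of_le hα0 with h | h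
    · exact h
    · exfalso
      have : Real.sqrt 2 * γ * α = 0 := by rw [← h]; ring
      have h2 := norm_nonneg ((WithLp.equiv 2 (EuclideanSpace ℝ (Fin m) × ℝ)).symm
        (u - (a : ℝ) • t, -(a : ℝ) * α))
      linarith [hshort, this ▸ hshort]
  -- triangle inequality
  have htri : ‖u - (a : ℝ) • tc‖ ≤ ‖u - (a : ℝ) • t‖ + |(a:ℝ)| * α := by
    have : u - (a : ℝ) • tc = (u - (a : ℝ) • t) + (a:ℝ) • (t - tc) := by
      rw [smul_sub]; abel
    rw [this]
    calc ‖(u - (a : ℝ) • t) + (a:ℝ) • (t - tc)‖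
        ≤ ‖u - (a : ℝ) • t‖ + ‖(a:ℝ) • (t - tc)‖ := norm_add_le _ _
      _ = ‖u - (a : ℝ) • t‖ + |(a:ℝ)| * α := by
          rw [norm_smul, Real.norm_eq_abs, norm_sub_rev t tc, htc]
  -- key bound : ‖u - a tc‖ < 2 γ α
  have hkey : ‖u - (a : ℝ) • tc‖ < 2 * γ * α := by
    have hK0 : 0 ≤ ‖u - (a : ℝ) • tc‖ := norm_nonneg _
    have h2γα : 0 < 2 * γ * α := by positivity
    nlinarith [sq_nonneg (‖u - (a : ℝ) • t‖ - |(a:ℝ)| * α), sq_abs (a:ℝ),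
      norm_nonneg (u - (a : ℝ) • t), abs_nonneg (a:ℝ)]
  have h2γα_le : 2 * γ * α ≤ sInf S := by
    nlinarith [hbdd, (le_div_iff₀ (by positivity : (0:ℝ) < 2*γ)).mp hbdd]
  have hlt : ‖u - (a : ℝ) • tc‖ < sInf S := lt_of_lt_of_le hkey h2γα_le
  refine ⟨hlt, ?_⟩
  -- u - a • tc is in the lattice
  by_contra hne
  have hmem : u - (a : ℝ) • tc ∈ L := by
    rw [hL] at huL htcL ⊢
    have : (a : ℝ) • tc = a • tc := (Int.cast_smul_eq_zsmul ℝ a tc).symm ▸ rfl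
    rw [show (a : ℝ) • tc = a • tc from (Int.cast_smul_eq_zsmul ℝ a tc)]
    exact Submodule.sub_mem _ huL (Submodule.smul_mem _ a htcL)
  have hne0 : u - (a : ℝ) • tc ≠ 0 := fun h => hne (by rwa [sub_eq_zero] at h)
  have hmemS : ‖u - (a : ℝ) • tc‖ ∈ S := ⟨u - (a : ℝ) • tc, hmem, hne0, rfl⟩
  have hbdd0 : BddBelow S := ⟨0, fun r ⟨w, _, _, hw⟩ => hw ▸ norm_nonneg w⟩
  exact absurd (csInf_le hbdd0 hmemS) (not_le.mpr hlt)
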